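/- For s ≥ 3, the complete bipartite-like graph A_s⁽⁵⁾ defined on vertices {x₁, x₂} ∪ {y_{i,j} : 1 ≤ i ≤ 2, 1 ≤ j ≤ s} with edges x₁x₂, all y_{1,j}y_{2,j}, and all x_i y_{i,j}, is triangle-free, 2-connected, and contains no dominating cycle. -/

import Mathlib

open SimpleGraph

def IsCycleEmb {V : Type*} (G : SimpleGraph V) (n : ℕ) (f : ZMod n → V) : Prop :=
  3 ≤ n ∧ Function.Injective f ∧ ∀ i : ZMod n, G.Adj (f i) (f (i + 1))

def IsLongestCycle {V : Type*} (G : SimpleGraph V) (n : ℕ) (f : ZMod n → V) : Prop :=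
  IsCycleEmb G n f ∧ ∀ (m : ℕ) (g : ZMod m → V), IsCycleEmb G m g → m ≤ n

def IsDominatingCycle {V : Type*} (G : SimpleGraph V) (n : ℕ) (f : ZMod n → V) : Prop :=
  IsCycleEmb G n f ∧ ∀ a b : V, G.Adj a b → a ∈ Set.range f ∨ b ∈ Set.range f

def IsCompOutside {V : Type*} (G : SimpleGraph V) (C : Set V) (H : Set V) : Prop :=
  H.Nonempty ∧ Disjoint H C ∧ (G.induce H).Connected ∧
    ∀ a ∈ H, ∀ b : V, G.Adj a b → b ∉ C → b ∈ H

def TwoConnected {V : Type*} (G : SimpleGraph V) : Prop :=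
  3 ≤ Nat.card V ∧ ∀ v : V, (G.induce ({v}ᶜ : Set V)).Connected

def KConnected {V : Type*} (G : SimpleGraph V) (k : ℕ) : Prop :=
  k < Nat.card V ∧ ∀ S : Set V, S.ncard < k → (G.induce (Sᶜ : Set V)).Connected

def HFree {W V : Type*} (H : SimpleGraph W) (G : SimpleGraph V) : Prop :=
  ¬ Nonempty (H ↪g G)

def IsCompleteMultipartite {V : Type*} (G : SimpleGraph V) : Prop :=
  ∃ s : Setoid V, ∀ a b : V, G.Adj a b ↔ ¬ s.r a b

/-- `W = K₁ + 3K₂`: vertex 0 joined to three disjoint edges 12, 34, 56. -/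
def Wgraph : SimpleGraph (Fin 7) :=
  SimpleGraph.fromRel (fun a b =>
    a = 0 ∨ (a = 1 ∧ b = 2) ∨ (a = 3 ∧ b = 4) ∨ (a = 5 ∧ b = 6))

/-- `Z₁`, the paw: triangle 012 plus pendant edge 23. -/
def pawGraph : SimpleGraph (Fin 4) :=
  SimpleGraph.fromRel (fun a b =>
    (a = 0 ∧ b = 1) ∨ (a = 1 ∧ b = 2) ∨ (a = 0 ∧ b = 2) ∨ (a = 2 ∧ b = 3))

/-- The claw `K₁,₃`. -/
def clawGraph : SimpleGraph (Fin 4) :=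
  SimpleGraph.fromRel (fun a _ => a = 0)

/-- `K₄` minus the edge 23. -/
def K4minusGraph : SimpleGraph (Fin 4) :=
  SimpleGraph.fromRel (fun a b => ¬((a = 2 ∧ b = 3) ∨ (a = 3 ∧ b = 2)))

/-- `K₁,₃**`: spider with legs of lengths 2, 2, 1 (center 0, legs 0-1-2, 0-3-4, 0-5). -/
def spider221 : SimpleGraph (Fin 6) :=
  SimpleGraph.fromRel (fun a b =>
    (a = 0 ∧ b = 1) ∨ (a = 1 ∧ b = 2) ∨ (a = 0 ∧ b = 3) ∨ (a = 3 ∧ b = 4) ∨ (a = 0 ∧ b = 5))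

/-- The theta graph `A_s`: two vertices joined by three internally disjoint paths,
each with `s` internal vertices. -/
def thetaGraph (s : ℕ) : SimpleGraph (Fin 2 ⊕ Fin 3 × Fin s) :=
  SimpleGraph.fromRel (fun a b =>
    (∃ (j : Fin 3) (k : Fin s), a = Sum.inl 0 ∧ b = Sum.inr (j, k) ∧ (k : ℕ) = 0) ∨
    (∃ (j : Fin 3) (k : Fin s), a = Sum.inl 1 ∧ b = Sum.inr (j, k) ∧ (k : ℕ) = s - 1) ∨
    (∃ (j : Fin 3) (k l : Fin s), a = Sum.inr (j, k) ∧ b = Sum.inr (j, l) ∧ (l : ℕ) = (k : ℕ) + 1))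

/-- `A′_s = 2K₁ + sK₂`. -/
def APrime (s : ℕ) : SimpleGraph (Fin 2 ⊕ Fin s × Fin 2) :=
  SimpleGraph.fromRel (fun a b =>
    (∃ (i : Fin 2) (x : Fin s × Fin 2), a = Sum.inl i ∧ b = Sum.inr x) ∨
    (∃ j : Fin s, a = Sum.inr (j, 0) ∧ b = Sum.inr (j, 1)))

/-- `A″_s = K₂ + (2K₂ ∪ K_s)`. -/
def ADoublePrime (s : ℕ) : SimpleGraph (Fin 2 ⊕ (Fin 2 × Fin 2 ⊕ Fin s)) :=
  SimpleGraph.fromRel (fun a b =>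
    (∃ i : Fin 2, a = Sum.inl i) ∨
    (∃ j : Fin 2, a = Sum.inr (Sum.inl (j, 0)) ∧ b = Sum.inr (Sum.inl (j, 1))) ∨
    (∃ p q : Fin s, a = Sum.inr (Sum.inr p) ∧ b = Sum.inr (Sum.inr q)))

/-- `A_s⁽¹⁾`: two disjoint triangles joined by three vertex-disjoint paths with `s`
internal vertices each. -/
def AOne (s : ℕ) : SimpleGraph (Fin 2 × Fin 3 ⊕ Fin 3 × Fin s) :=
  SimpleGraph.fromRel (fun a b =>
    (∃ (t : Fin 2) (i j : Fin 3), a = Sum.inl (t, i) ∧ b = Sum.inl (t, j)) ∨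
    (∃ (j : Fin 3) (k : Fin s), a = Sum.inl (0, j) ∧ b = Sum.inr (j, k) ∧ (k : ℕ) = 0) ∨
    (∃ (j : Fin 3) (k : Fin s), a = Sum.inl (1, j) ∧ b = Sum.inr (j, k) ∧ (k : ℕ) = s - 1) ∨
    (∃ (j : Fin 3) (k l : Fin s), a = Sum.inr (j, k) ∧ b = Sum.inr (j, l) ∧ (l : ℕ) = (k : ℕ) + 1))

/-- `A_s⁽⁵⁾`: vertices `x₁, x₂` and `y_{i,j}`; edges `x₁x₂`, `y_{1,j}y_{2,j}`, `x_i y_{i,j}`. -/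
def AFive (s : ℕ) : SimpleGraph (Fin 2 ⊕ Fin 2 × Fin s) :=
  SimpleGraph.fromRel (fun a b =>
    (a = Sum.inl 0 ∧ b = Sum.inl 1) ∨
    (∃ j : Fin s, a = Sum.inr (0, j) ∧ b = Sum.inr (1, j)) ∨
    (∃ (i : Fin 2) (j : Fin s), a = Sum.inl i ∧ b = Sum.inr (i, j)))

section AFiveProof

variable {s : ℕ}

lemma afive_adj_ll (s : ℕ) (a b : Fin 2) :
    (AFive s).Adj (Sum.inl a) (Sum.inl b) ↔ a ≠ b := by
  simp only [AFive, fromRel_adj]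
  simp [Prod.ext_iff]
  fin_cases a <;> fin_cases b <;> simp_all <;> tauto

lemma afive_adj_lr (s : ℕ) (a i : Fin 2) (j : Fin s) :
    (AFive s).Adj (Sum.inl a) (Sum.inr (i, j)) ↔ a = i := by
  simp only [AFive, fromRel_adj]
  simp [Prod.ext_iff]
  tauto

lemma afive_adj_rl (s : ℕ) (a i : Fin 2) (j : Fin s) :
    (AFive s).Adj (Sum.inr (i, j)) (Sum.inl a) ↔ i = a := by
  rw [adj_comm, afive_adj_lr]; exact eq_comm

lemma afive_adj_rr (s : ℕ) (i i' : Fin 2) (j j' : Fin s) :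
    (AFive s).Adj (Sum.inr (i, j)) (Sum.inr (i', j')) ↔ j = j' ∧ i ≠ i' := by
  simp only [AFive, fromRel_adj]
  simp [Prod.ext_iff]
  fin_cases i <;> fin_cases i' <;> simp_all <;> tauto

/-- classification of neighbours of an inner vertex -/
lemma afive_nbr {b : Fin 2 ⊕ Fin 2 × Fin s} {i : Fin 2} {j : Fin s}
    (h : (AFive s).Adj (Sum.inr (i, j)) b) :
    b = Sum.inl i ∨ b = Sum.inr (1 - i, j) := by
  match b with
  | Sum.inl a =>
    rw [afive_adj_rl] at h; left; rw [h]
  | Sum.inr (i', j') =>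
    rw [afive_adj_rr] at h
    right
    obtain ⟨rfl, hne⟩ := h
    have : i' = 1 - i := by fin_cases i <;> fin_cases i' <;> simp_all
    rw [this]

lemma afive_cliquefree (s : ℕ) : (AFive s).CliqueFree 3 := by
  intro t ht
  rw [is3Clique_iff] at ht
  obtain ⟨a, b, c, hab, hac, hbc, -⟩ := ht
  rcases a with a | ⟨i₁, j₁⟩ <;> rcases b with b | ⟨i₂, j₂⟩ <;> rcases c with c | ⟨i₃, j₃⟩ <;>
    simp only [afive_adj_ll, afive_adj_lr, afive_adj_rl, afive_adj_rr] at hab hac hbc <;>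
    [skip; skip; skip; skip; skip; skip; skip; skip] <;>
    first
      | (obtain ⟨-, h1⟩ := hbc; omega)
      | (fin_cases a <;> fin_cases b <;> fin_cases c <;> simp_all)
      | simp_all
      | (obtain ⟨-, h1⟩ := hab; obtain ⟨-, h2⟩ := hac; obtain ⟨-, h3⟩ := hbc;
          fin_cases i₁ <;> fin_cases i₂ <;> fin_cases i₃ <;> simp_all)

lemma afive_induce_adj {S : Set (Fin 2 ⊕ Fin 2 × Fin s)} {a b : ↑S}
    (h : (AFive s).Adj a.val b.val) : ((AFive s).induce S).Adj a b := by
  simpa using h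

lemma afive_twoconnected (s : ℕ) (hs : 3 ≤ s) : TwoConnected (AFive s) := by
  constructor
  · simp only [Nat.card_eq_fintype_card, Fintype.card_sum, Fintype.card_prod, Fintype.card_fin]
    omega
  intro v
  rw [connected_iff]
  have hmem : ∀ x : Fin 2 ⊕ Fin 2 × Fin s, x ≠ v → x ∈ ({v}ᶜ : Set _) := by
    intro x hx; simp [hx]
  rcases v with a | ⟨i₀, j₀⟩
  · -- removed an outer vertex; hub is the other outer vertex
    have hhub : (Sum.inl (1 - a) : Fin 2 ⊕ Fin 2 × Fin s) ∈ ({Sum.inl a}ᶜ : Set _) := by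
      apply hmem; simp only [ne_eq, Sum.inl.injEq]; fin_cases a <;> decide
    refine ⟨?_, ⟨_, hhub⟩⟩
    have key : ∀ u : ↑({(Sum.inl a : Fin 2 ⊕ Fin 2 × Fin s)}ᶜ : Set _),
        ((AFive s).induce _).Reachable u ⟨_, hhub⟩ := by
      rintro ⟨u, hu⟩
      rcases u with b | ⟨i, j⟩
      · have hb : b = 1 - a := by
          have : b ≠ a := by simpa using hu
          fin_cases a <;> fin_cases b <;> simp_all
        subst hb; rfl
      · by_cases hi : i = 1 - a
        · subst hi
          exact (afive_induce_adj (by rw [afive_adj_rl])).reachable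
        · have hia : i = a := by fin_cases a <;> fin_cases i <;> simp_all
          subst hia
          have hmid : (Sum.inr (1 - i, j) : Fin 2 ⊕ Fin 2 × Fin s) ∈
              ({Sum.inl i}ᶜ : Set _) := hmem _ (by simp)
          refine Reachable.trans (v := ⟨Sum.inr (1 - i, j), hmid⟩) ?_ (Reachable.symm ?_)
          · exact (afive_induce_adj (a := ⟨_, hu⟩) (b := ⟨_, hmid⟩)
              (by rw [afive_adj_rr]; exact ⟨rfl, by fin_cases i <;> simp⟩)).reachable
          · exact (afive_induce_adj (a := ⟨_, hhub⟩) (b := ⟨_, hmid⟩)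
              (by rw [afive_adj_lr])).reachable
    intro u w; exact (key u).trans (key w).symm
  · -- removed an inner vertex; hub is x₁ = inl 0
    have hhub : (Sum.inl 0 : Fin 2 ⊕ Fin 2 × Fin s) ∈ ({Sum.inr (i₀, j₀)}ᶜ : Set _) :=
      hmem _ (by simp)
    refine ⟨?_, ⟨_, hhub⟩⟩
    have hx : ∀ b : Fin 2, ((AFive s).induce ({(Sum.inr (i₀, j₀) : Fin 2 ⊕ Fin 2 × Fin s)}ᶜ : Set _)).Reachable
        ⟨Sum.inl b, hmem _ (by simp)⟩ ⟨_, hhub⟩ := by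
      intro b
      by_cases hb : b = 0
      · subst hb; rfl
      · exact (afive_induce_adj (by rw [afive_adj_ll]; exact hb)).reachable
    have key : ∀ u : ↑({(Sum.inr (i₀, j₀) : Fin 2 ⊕ Fin 2 × Fin s)}ᶜ : Set _),
        ((AFive s).induce _).Reachable u ⟨_, hhub⟩ := by
      rintro ⟨u, hu⟩
      rcases u with b | ⟨i, j⟩
      · exact hx b
      · refine Reachable.trans ?_ (hx i)
        exact (afive_induce_adj (a := ⟨_, hu⟩) (b := ⟨Sum.inl i, hmem _ (by simp)⟩)
          (by rw [afive_adj_rl])).reachable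
    intro u w; exact (key u).trans (key w).symm

lemma afive_no_dominating (s : ℕ) (hs : 3 ≤ s) :
    ¬ ∃ (n : ℕ) (f : ZMod n → (Fin 2 ⊕ Fin 2 × Fin s)),
      IsDominatingCycle (AFive s) n f := by
  rintro ⟨n, f, ⟨⟨hn, hinj, hadj⟩, hdom⟩⟩
  have htwo : (2 : ZMod n) ≠ 0 := by
    have : NeZero n := ⟨by omega⟩
    intro hh
    rw [show (2 : ZMod n) = ((2 : ℕ) : ZMod n) by push_cast; ring,
      ZMod.natCast_eq_zero_iff] at hh
    have := Nat.le_of_dvd (by norm_num) hh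
    omega
  -- neighbours on the cycle of an inner vertex
  have nbr : ∀ (t : ZMod n) (i : Fin 2) (j : Fin s), f t = Sum.inr (i, j) →
      (f (t + 1) = Sum.inl i ∧ f (t - 1) = Sum.inr (1 - i, j)) ∨
      (f (t + 1) = Sum.inr (1 - i, j) ∧ f (t - 1) = Sum.inl i) := by
    intro t i j ht
    have h1 : (AFive s).Adj (Sum.inr (i, j)) (f (t + 1)) := ht ▸ hadj t
    have h2 : (AFive s).Adj (Sum.inr (i, j)) (f (t - 1)) := by
      have := (hadj (t - 1)).symm
      rw [sub_add_cancel, ht] at this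
      exact this
    have c1 := afive_nbr h1
    have c2 := afive_nbr h2
    have hne : f (t + 1) ≠ f (t - 1) := by
      intro hh
      have h3 : t + 1 = t - 1 := hinj hh
      have : (2 : ZMod n) = 0 := by linear_combination h3
      exact htwo this
    rcases c1 with c1 | c1 <;> rcases c2 with c2 | c2
    · exact absurd (c1.trans c2.symm) hne
    · exact Or.inl ⟨c1, c2⟩
    · exact Or.inr ⟨c1, c2⟩
    · exact absurd (c1.trans c2.symm) hne
  -- every column has its 0-row vertex on the cycle
  have hx0 : ∀ j : Fin s, ∃ t, f t = Sum.inr (0, j) := by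
    intro j
    have hedge : (AFive s).Adj (Sum.inr (0, j)) (Sum.inr (1, j)) := by
      rw [afive_adj_rr]; exact ⟨rfl, by decide⟩
    rcases hdom _ _ hedge with ⟨t, ht⟩ | ⟨t, ht⟩
    · exact ⟨t, ht⟩
    · rcases nbr t 1 j ht with ⟨-, h⟩ | ⟨h, -⟩ <;>
        exact ⟨_, by rw [h]; norm_num⟩
  -- x₁ is on the cycle
  obtain ⟨t₀, ht₀⟩ : ∃ t₀, f t₀ = Sum.inl 0 := by
    obtain ⟨t, ht⟩ := hx0 ⟨0, by omega⟩
    rcases nbr t 0 ⟨0, by omega⟩ ht with ⟨h, -⟩ | ⟨-, h⟩ <;> exact ⟨_, h⟩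
  -- each 0-row vertex sits next to t₀ on the cycle
  have hloc : ∀ j : Fin s, ∃ u, f u = Sum.inr (0, j) ∧ (u = t₀ + 1 ∨ u = t₀ - 1) := by
    intro j
    obtain ⟨t, ht⟩ := hx0 j
    rcases nbr t 0 j ht with ⟨h, -⟩ | ⟨-, h⟩
    · refine ⟨t, ht, Or.inr ?_⟩
      have : t + 1 = t₀ := hinj (h.trans ht₀.symm)
      linear_combination this
    · refine ⟨t, ht, Or.inl ?_⟩
      have : t - 1 = t₀ := hinj (h.trans ht₀.symm)
      linear_combination this
  obtain ⟨u₀, hu₀, hd₀⟩ := hloc ⟨0, by omega⟩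
  obtain ⟨u₁, hu₁, hd₁⟩ := hloc ⟨1, by omega⟩
  obtain ⟨u₂, hu₂, hd₂⟩ := hloc ⟨2, by omega⟩
  have col : ∀ (a b : ℕ) (ha : a < s) (hb : b < s) (u : ZMod n),
      f u = Sum.inr (0, ⟨a, ha⟩) → f u = Sum.inr (0, ⟨b, hb⟩) → a = b := by
    intro a b ha hb u h1 h2
    rw [h1] at h2
    simpa [Fin.ext_iff] using h2
  rcases hd₀ with rfl | rfl <;> rcases hd₁ with h1 | h1 <;> rcases hd₂ with h2 | h2 <;>
    [ exact absurd (col _ _ _ _ _ hu₀ (h1 ▸ hu₁)) (by omega);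
      exact absurd (col _ _ _ _ _ hu₀ (h1 ▸ hu₁)) (by omega);
      exact absurd (col _ _ _ _ _ hu₀ (h2 ▸ hu₂)) (by omega);
      exact absurd (col _ _ _ _ _ (h1 ▸ hu₁) (h2 ▸ hu₂)) (by omega);
      exact absurd (col _ _ _ _ _ (h1 ▸ hu₁) (h2 ▸ hu₂)) (by omega);
      exact absurd (col _ _ _ _ _ hu₀ (h2 ▸ hu₂)) (by omega);
      exact absurd (col _ _ _ _ _ hu₀ (h1 ▸ hu₁)) (by omega);
      exact absurd (col _ _ _ _ _ hu₀ (h1 ▸ hu₁)) (by omega) ]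

end AFiveProof

/-- For `s ≥ 3`, the graph `A_s⁽⁵⁾` is triangle-free, 2-connected, and has no
dominating cycle. -/
theorem stmt13 (s : ℕ) (hs : 3 ≤ s) :
    (AFive s).CliqueFree 3 ∧ TwoConnected (AFive s) ∧
      ¬ ∃ (n : ℕ) (f : ZMod n → (Fin 2 ⊕ Fin 2 × Fin s)),
        IsDominatingCycle (AFive s) n f := by
  exact ⟨afive_cliquefree s, afive_twoconnected s hs, afive_no_dominating s hs⟩
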